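/- Let (k,l) belong to the class PC and let μ > 0. Let s_μ : (0,∞) → ℝ be a nonnegative, nonincreasing, measurable, locally integrable function satisfying s_μ(t) + μ·(l ∗ s_μ)(t) = 1 for all t > 0. Then for almost every t > 0 with ∫_0^t l(τ) dτ > 0, one has μ · s_μ(t) ≤ (∫_0^t l(τ) dτ)^{−1}. -/

import Mathlib

open MeasureTheory Set

/-- Laplace convolution on `(0, ∞)`: `(f ∗ g)(t) = ∫_0^t f(t−τ) g(τ) dτ`. -/
noncomputable def lconv (f g : ℝ → ℝ) (t : ℝ) : ℝ := ∫ τ in (0:ℝ)..t, f (t - τ) * g τ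

/-- The pair `(k, l)` belongs to the class `PC`. -/
structure SoninePC (k l : ℝ → ℝ) : Prop where
  k_nonneg : ∀ t ∈ Ioi (0:ℝ), 0 ≤ k t
  k_anti : AntitoneOn k (Ioi 0)
  k_locInt : LocallyIntegrableOn k (Ioi 0)
  l_nonneg : ∀ t ∈ Ioi (0:ℝ), 0 ≤ l t
  l_locInt : LocallyIntegrableOn l (Ioi 0)
  sonine : ∀ t ∈ Ioi (0:ℝ), lconv k l t = 1

/-- `l` is integrable near `0`, hence on every `Ioc 0 t`. -/
lemma SoninePC.l_int {k l : ℝ → ℝ} (hkl : SoninePC k l) {t : ℝ} (ht : 0 < t) :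
    IntegrableOn l (Ioc 0 t) := by
  -- find t1 with k t1 > 0
  obtain ⟨t1, ht1, hkt1⟩ : ∃ t1 : ℝ, 0 < t1 ∧ 0 < k t1 := by
    by_contra h
    push_neg at h
    have hk0 : ∀ u ∈ Ioi (0:ℝ), k u = 0 := fun u hu =>
      le_antisymm (h u hu) (hkl.k_nonneg u hu)
    have h1 := hkl.sonine 1 (by norm_num)
    rw [lconv] at h1
    have : (∫ τ in (0:ℝ)..1, k (1 - τ) * l τ) = 0 := by
      rw [intervalIntegral.integral_of_le (by norm_num : (0:ℝ) ≤ 1)]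
      have : EqOn (fun τ => k (1 - τ) * l τ) 0 (Ioo 0 1) := by
        intro τ hτ
        simp [hk0 (1 - τ) (by simp [mem_Ioi]; linarith [hτ.2])]
      calc (∫ τ in Ioc (0:ℝ) 1, k (1 - τ) * l τ)
          = ∫ τ in Ioo (0:ℝ) 1, k (1 - τ) * l τ := by
            rw [← MeasureTheory.Measure.restrict_congr_set Ioo_ae_eq_Ioc]
        _ = 0 := by
            rw [setIntegral_congr_fun measurableSet_Ioo this]; simp
    rw [this] at h1; norm_num at h1
  -- the Sonine integrand is integrable on (0, t1)
  have hF : IntegrableOn (fun τ => k (t1 - τ) * l τ) (Ioc 0 t1) := by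
    by_contra h
    have h1 := hkl.sonine t1 ht1
    rw [lconv, intervalIntegral.integral_of_le ht1.le, integral_undef h] at h1
    norm_num at h1
  -- hence l integrable on (0, t1/2]
  have hlm : AEStronglyMeasurable l (volume.restrict (Ioc 0 (t1 / 2))) :=
    hkl.l_locInt.aestronglyMeasurable.mono_measure
      (Measure.restrict_mono (fun x hx => hx.1) le_rfl)
  have hmul : IntegrableOn (fun τ => k t1 * l τ) (Ioc 0 (t1 / 2)) := by
    refine Integrable.mono (hF.mono_set (Ioc_subset_Ioc_right (by linarith)))
      (aestronglyMeasurable_const.mul hlm) ?_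
    refine (ae_restrict_iff' measurableSet_Ioc).2 (ae_of_all _ fun τ hτ => ?_)
    have hτ0 : 0 < τ := hτ.1
    have hl0 : 0 ≤ l τ := hkl.l_nonneg τ hτ0
    have hksub : 0 < t1 - τ := by linarith [hτ.2]
    have hk2 : k t1 ≤ k (t1 - τ) :=
      hkl.k_anti (mem_Ioi.2 hksub) (mem_Ioi.2 ht1) (by linarith)
    rw [Real.norm_eq_abs, Real.norm_eq_abs, abs_of_nonneg (mul_nonneg hkt1.le hl0),
      abs_of_nonneg (mul_nonneg (le_trans hkt1.le hk2) hl0)]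
    exact mul_le_mul_of_nonneg_right hk2 hl0
  have hl1 : IntegrableOn l (Ioc 0 (t1 / 2)) := by
    have h2 := hmul.const_mul (k t1)⁻¹
    simp [← mul_assoc, inv_mul_cancel₀ hkt1.ne'] at h2; exact h2
  rcases le_or_gt t (t1 / 2) with h | h
  · exact hl1.mono_set (Ioc_subset_Ioc_right h)
  · have hl2 : IntegrableOn l (Icc (t1 / 2) t) :=
      hkl.l_locInt.integrableOn_compact_subset
        (fun x hx => lt_of_lt_of_le (half_pos ht1) hx.1) isCompact_Icc
    refine (hl1.union hl2).mono_set (fun x hx => ?_)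
    rcases le_or_gt x (t1 / 2) with h2 | h2
    · exact Or.inl ⟨hx.1, h2⟩
    · exact Or.inr ⟨h2.le, hx.2⟩

theorem stmt_17 (k l : ℝ → ℝ) (hkl : SoninePC k l) (μ : ℝ) (hμ : 0 < μ)
    (s : ℝ → ℝ)
    (hs_nonneg : ∀ t ∈ Ioi (0:ℝ), 0 ≤ s t)
    (hs_anti : AntitoneOn s (Ioi 0))
    (hs_meas : Measurable s)
    (hs_locInt : LocallyIntegrableOn s (Ioi 0))
    (hvolt : ∀ t ∈ Ioi (0:ℝ), s t + μ * lconv l s t = 1) :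
    ∀ᵐ t : ℝ, (t ∈ Ioi (0:ℝ) ∧ 0 < ∫ τ in (0:ℝ)..t, l τ) →
      μ * s t ≤ (∫ τ in (0:ℝ)..t, l τ)⁻¹ := by
  -- s ≤ 1 on (0,∞), since the convolution term is nonneg
  have hconv_nonneg : ∀ u ∈ Ioi (0:ℝ), 0 ≤ lconv l s u := by
    intro u hu
    rw [lconv, intervalIntegral.integral_of_le (le_of_lt hu),
      ← Measure.restrict_congr_set Ioo_ae_eq_Ioc]
    refine setIntegral_nonneg measurableSet_Ioo fun τ hτ => ?_
    exact mul_nonneg (hkl.l_nonneg _ (mem_Ioi.2 (by linarith [hτ.2])))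
      (hs_nonneg τ hτ.1)
  have hs_le1 : ∀ u ∈ Ioi (0:ℝ), s u ≤ 1 := by
    intro u hu
    have h1 := hvolt u hu
    nlinarith [hconv_nonneg u hu]
  refine Filter.Eventually.of_forall ?_
  rintro t ⟨ht, hL⟩
  have ht0 : (0:ℝ) < t := ht
  set L := ∫ τ in (0:ℝ)..t, l τ with hLdef
  have hlint : IntegrableOn l (Ioc 0 t) := hkl.l_int ht0
  have hli : IntervalIntegrable l volume 0 t :=
    (intervalIntegrable_iff_integrableOn_Ioc_of_le ht0.le).2 hlint
  have hlsub : IntervalIntegrable (fun τ => l (t - τ)) volume 0 t := by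
    simpa using (hli.comp_sub_left t).symm
  have hint1 : IntegrableOn (fun τ => l (t - τ)) (Ioo 0 t) :=
    ((intervalIntegrable_iff_integrableOn_Ioc_of_le ht0.le).1 hlsub).mono_set
      Ioo_subset_Ioc_self
  have hint2 : IntegrableOn (fun τ => l (t - τ) * s τ) (Ioo 0 t) := by
    refine Integrable.mono hint1
      (hint1.aestronglyMeasurable.mul hs_meas.aestronglyMeasurable) ?_
    refine (ae_restrict_iff' measurableSet_Ioo).2 (ae_of_all _ fun τ hτ => ?_)
    have hl0 : 0 ≤ l (t - τ) := hkl.l_nonneg _ (mem_Ioi.2 (by linarith [hτ.2]))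
    have hs0 : 0 ≤ s τ := hs_nonneg τ hτ.1
    have hs1 : s τ ≤ 1 := hs_le1 τ hτ.1
    rw [Real.norm_eq_abs, Real.norm_eq_abs, abs_of_nonneg (mul_nonneg hl0 hs0),
      abs_of_nonneg hl0]
    nlinarith
  have hLrw : (∫ τ in Ioo (0:ℝ) t, l (t - τ)) = L := by
    rw [Measure.restrict_congr_set Ioo_ae_eq_Ioc,
      ← intervalIntegral.integral_of_le ht0.le,
      intervalIntegral.integral_comp_sub_left l t]
    simp [hLdef]
  have hmono : (∫ τ in Ioo (0:ℝ) t, l (t - τ) * s t)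
      ≤ ∫ τ in Ioo (0:ℝ) t, l (t - τ) * s τ := by
    refine setIntegral_mono_on (hint1.mul_const (s t)) hint2 measurableSet_Ioo
      fun τ hτ => ?_
    have hl0 : 0 ≤ l (t - τ) := hkl.l_nonneg _ (mem_Ioi.2 (by linarith [hτ.2]))
    exact mul_le_mul_of_nonneg_left
      (hs_anti (mem_Ioi.2 hτ.1) (mem_Ioi.2 ht0) hτ.2.le) hl0
  have hconv_ge : L * s t ≤ lconv l s t := by
    rw [lconv, intervalIntegral.integral_of_le ht0.le,
      ← Measure.restrict_congr_set Ioo_ae_eq_Ioc]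
    calc L * s t = (∫ τ in Ioo (0:ℝ) t, l (t - τ)) * s t := by rw [hLrw]
      _ = ∫ τ in Ioo (0:ℝ) t, l (t - τ) * s t := (integral_mul_const _ _).symm
      _ ≤ _ := hmono
  have h1 := hvolt t ht
  have hst0 : 0 ≤ s t := hs_nonneg t ht
  rw [← one_div, le_div_iff₀ hL]
  nlinarith [mul_le_mul_of_nonneg_left hconv_ge hμ.le]
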